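/- The function g(p) = 2p(1−p)/(1−2p+2p^2)^2 on (0,1) is a probability density: it integrates to 1, is symmetric about 1/2, and has variance ∫_0^1 (p−1/2)^2 g(p) dp = (π−3)/4. -/

import Mathlib

open Real

/-- Stationary density of the status-quo reference rule. -/
noncomputable def statDens (p : ℝ) : ℝ := 2 * p * (1 - p) / (1 - 2*p + 2*p^2)^2

lemma denom_ne (p : ℝ) : (1 - 2*p + 2*p^2) ≠ 0 := by nlinarith [sq_nonneg (2*p-1)]

lemma denom2_ne (p : ℝ) : ((2*p-1)^2 + 1) ≠ 0 := by positivity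

lemma hlin (p : ℝ) : HasDerivAt (fun x : ℝ => 2*x - 1) 2 p := by
  simpa using ((hasDerivAt_id p).const_mul 2).sub_const 1

lemma hF (p : ℝ) : HasDerivAt (fun x : ℝ => (2*x-1)/((2*x-1)^2+1)) (statDens p) p := by
  have h1 := hlin p
  have h2 : HasDerivAt (fun x : ℝ => (2*x-1)^2+1) (2*(2*p-1)*2) p := by
    simpa using (h1.pow 2).add_const 1
  have := h1.div h2 (denom2_ne p)
  refine this.congr_deriv (Eq.symm ?_)
  unfold statDens
  rw [div_eq_div_iff (pow_ne_zero 2 (denom_ne p)) (by positivity)]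
  ring

lemma hG (p : ℝ) :
    HasDerivAt (fun x : ℝ => (1/4)*(-(2*x-1) + 2*Real.arctan (2*x-1) - (2*x-1)/((2*x-1)^2+1)))
      ((p - 1/2)^2 * statDens p) p := by
  have h1 := hlin p
  have ha : HasDerivAt (fun x : ℝ => Real.arctan (2*x-1)) (1/(1+(2*p-1)^2) * 2) p :=
    h1.arctan
  have h2 : HasDerivAt (fun x : ℝ => (2*x-1)^2+1) (2*(2*p-1)*2) p := by
    simpa using (h1.pow 2).add_const 1
  have hd := h1.div h2 (denom2_ne p)
  have := (((h1.neg.add (ha.const_mul 2)).sub hd).const_mul (1/4))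
  refine this.congr_deriv (Eq.symm ?_)
  unfold statDens
  have h0 : (1 + (2*p-1)^2) ≠ 0 := by positivity
  have h0' : ((2*p-1)^2 + 1) ≠ 0 := by positivity
  have hs : (1 - 2*p + 2*p^2) = ((2*p-1)^2+1)/2 := by ring
  rw [hs]
  field_simp
  ring

theorem stmt_3 :
    (∀ p ∈ Set.Ioo (0:ℝ) 1, 0 ≤ statDens p) ∧
    (∫ p in (0:ℝ)..1, statDens p) = 1 ∧
    (∀ p ∈ Set.Ioo (0:ℝ) 1, statDens p = statDens (1 - p)) ∧
    (∫ p in (0:ℝ)..1, (p - 1/2)^2 * statDens p) = (π - 3) / 4 := by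
  have hcont : Continuous statDens := by
    unfold statDens
    exact (continuous_const.mul continuous_id |>.mul (continuous_const.sub continuous_id)).div
      ((continuous_const.sub (continuous_const.mul continuous_id)).add
        (continuous_const.mul (continuous_pow 2)) |>.pow 2)
      (fun x => pow_ne_zero 2 (denom_ne x))
  refine ⟨?_, ?_, ?_, ?_⟩
  · intro p hp
    unfold statDens
    have := hp.1; have := hp.2
    apply div_nonneg (by nlinarith) (by positivity)
  · rw [intervalIntegral.integral_eq_sub_of_hasDerivAt (fun x _ => hF x)
      (hcont.intervalIntegrable 0 1)]
    norm_num
  · intro p _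
    unfold statDens
    ring_nf
  · rw [intervalIntegral.integral_eq_sub_of_hasDerivAt (fun x _ => hG x)
      ((((continuous_id.sub continuous_const).pow 2).mul hcont).intervalIntegrable 0 1)]
    norm_num [Real.arctan_one, Real.arctan_neg]
    ring
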